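/- Let A ⊂ ℝ² be the closed disk of radius R > 0 centered at the origin, and let γ : [0,∞) → ℝ be a bounded measurable function. Then (1/|A|²)·∫_{A×A} γ(‖s − t‖) ds dt = ∫_0^{2R} γ(h)·f_disk(h,R) dh, where ‖·‖ is the Euclidean norm. Equivalently, if S and T are independent random variables uniformly distributed on A, then E[γ(‖S−T‖)] = ∫_0^{2R} γ(h)·f_disk(h,R) dh. -/

import Mathlib

open MeasureTheory

/-- Density of the distance between two independent uniform points in a disk
of radius `R`. -/
noncomputable def fdisk (h R : ℝ) : ℝ :=
  (2 * h / R ^ 2) *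
    ((2 / Real.pi) * Real.arccos (h / (2 * R))
      - (h / (Real.pi * R)) * Real.sqrt (1 - h ^ 2 / (4 * R ^ 2)))

open Real Set

noncomputable def Lfun (R r : ℝ) : ℝ :=
  2 * R^2 * Real.arccos (r / (2*R)) - r/2 * Real.sqrt (4*R^2 - r^2)

abbrev E2 : Type := EuclideanSpace ℝ (Fin 2)

lemma ftc_sqrt (R : ℝ) (hR : 0 < R) (c : ℝ) (hc0 : 0 ≤ c) (hcR : c ≤ R) :
    ∫ x in c..R, Real.sqrt (R^2 - x^2)
      = (R^2 * (π/2) - (c * Real.sqrt (R^2 - c^2) + R^2 * Real.arcsin (c/R))) / 2 := by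
  set F : ℝ → ℝ := fun x => (x * Real.sqrt (R^2 - x^2) + R^2 * Real.arcsin (x/R)) / 2 with hF
  have key : ∫ x in c..R, Real.sqrt (R^2 - x^2) = F R - F c := by
    apply intervalIntegral.integral_eq_sub_of_hasDerivAt_of_le hcR
    · apply ContinuousOn.div_const
      apply ContinuousOn.add
      · exact (continuousOn_id.mul ((continuous_const.sub (continuous_pow 2)).continuousOn.sqrt))
      · exact continuousOn_const.mul (Real.continuous_arcsin.comp_continuousOn (continuousOn_id.div_const R))
    · intro x hx
      have hx1 : -R < x := lt_of_le_of_lt (neg_nonpos.mpr hR.le) (lt_of_le_of_lt hc0 hx.1)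
      have hx2 : x < R := hx.2
      have hs : 0 < R^2 - x^2 := by nlinarith
      set s := Real.sqrt (R^2 - x^2) with hsdef
      have hspos : 0 < s := Real.sqrt_pos.mpr hs
      have hs2 : s^2 = R^2 - x^2 := Real.sq_sqrt hs.le
      have d1 : HasDerivAt (fun x : ℝ => R^2 - x^2) (-(2*x)) x := by
        simpa using ((hasDerivAt_pow 2 x).const_sub (R^2))
      have d2 : HasDerivAt (fun x : ℝ => Real.sqrt (R^2 - x^2)) (-(2*x) / (2*s)) x :=
        (Real.hasDerivAt_sqrt hs.ne').comp x d1 |>.congr_deriv (by ring)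
      have d3 : HasDerivAt (fun x : ℝ => x * Real.sqrt (R^2 - x^2))
          (1 * s + x * (-(2*x) / (2*s))) x := (hasDerivAt_id x).mul d2
      have hxR1 : x / R ≠ -1 := by
        intro h; rw [div_eq_iff hR.ne'] at h; linarith
      have hxR2 : x / R ≠ 1 := by
        intro h; rw [div_eq_one_iff_eq hR.ne'] at h; linarith
      have d4 : HasDerivAt (fun x : ℝ => Real.arcsin (x/R))
          ((1 / Real.sqrt (1 - (x/R)^2)) * (1/R)) x :=
        (Real.hasDerivAt_arcsin hxR1 hxR2).comp (h := fun y => y / R) x ((hasDerivAt_id x).div_const R)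
      have hsq : Real.sqrt (1 - (x/R)^2) = s / R := by
        rw [show 1 - (x/R)^2 = (s/R)^2 by rw [div_pow s, hs2]; field_simp]
        exact Real.sqrt_sq (by positivity)
      rw [hsq] at d4
      have := (d3.add (d4.const_mul (R^2))).div_const 2
      refine this.congr_deriv ?_
      field_simp
      linear_combination (-1) * hs2
    · exact ((continuous_const.sub (continuous_pow 2)).sqrt).intervalIntegrable c R
  rw [key, hF]
  have h1 : Real.sqrt (R^2 - R^2) = 0 := by simp
  have h2 : R / R = 1 := div_self hR.ne'
  simp only [h1, h2, Real.arcsin_one]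
  ring

lemma lens_integral (R r : ℝ) (hR : 0 < R) (hr : 0 ≤ r) (hr2 : r ≤ 2*R) :
    ∫ x : ℝ, 2 * Real.sqrt (min (R^2 - x^2) (R^2 - (x - r)^2)) = Lfun R r := by
  set g : ℝ → ℝ := fun x => 2 * Real.sqrt (min (R^2 - x^2) (R^2 - (x - r)^2)) with hg
  have hzero : ∀ x ∉ Ioc (r - R) R, g x = 0 := by
    intro x hx
    simp only [mem_Ioc, not_and_or, not_lt, not_le] at hx
    have : min (R^2 - x^2) (R^2 - (x - r)^2) ≤ 0 := by
      rcases hx with h | h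
      · exact le_trans (min_le_right _ _) (by nlinarith)
      · exact le_trans (min_le_left _ _) (by nlinarith)
    simp only [hg]
    rw [Real.sqrt_eq_zero'.mpr this, mul_zero]
  have h1 : ∫ x : ℝ, g x = ∫ x in (r-R)..R, g x := by
    rw [intervalIntegral.integral_of_le (by linarith)]
    exact (setIntegral_eq_integral_of_forall_compl_eq_zero hzero).symm
  have hgc : Continuous g := by
    apply continuous_const.mul
    apply Real.continuous_sqrt.comp
    exact ((continuous_const.sub (continuous_pow 2)).min
      (continuous_const.sub ((continuous_id.sub continuous_const).pow 2)))
  have hsplit : ∫ x in (r-R)..R, g x = (∫ x in (r-R)..(r/2), g x) + ∫ x in (r/2)..R, g x :=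
    (intervalIntegral.integral_add_adjacent_intervals
      (hgc.intervalIntegrable _ _) (hgc.intervalIntegrable _ _)).symm
  have hright : ∫ x in (r/2)..R, g x = ∫ x in (r/2)..R, 2 * Real.sqrt (R^2 - x^2) := by
    apply intervalIntegral.integral_congr
    intro x hx
    rw [uIcc_of_le (by linarith)] at hx
    show 2 * Real.sqrt (min (R^2 - x^2) (R^2 - (x - r)^2)) = 2 * Real.sqrt (R^2 - x^2)
    congr 1
    rw [min_eq_left]
    nlinarith [hx.1, hx.2]
  have hleft : ∫ x in (r-R)..(r/2), g x = ∫ x in (r/2)..R, 2 * Real.sqrt (R^2 - x^2) := by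
    have hcong : ∫ x in (r-R)..(r/2), g x
        = ∫ x in (r-R)..(r/2), (fun y => 2 * Real.sqrt (R^2 - y^2)) (r - x) := by
      apply intervalIntegral.integral_congr
      intro x hx
      rw [uIcc_of_le (by linarith)] at hx
      show 2 * Real.sqrt (min (R^2 - x^2) (R^2 - (x - r)^2)) = 2 * Real.sqrt (R^2 - (r - x)^2)
      rw [min_eq_right (by nlinarith [hx.1, hx.2] : R^2 - (x-r)^2 ≤ R^2 - x^2)]
      congr 2
      ring
    rw [hcong, intervalIntegral.integral_comp_sub_left (fun y => 2 * Real.sqrt (R^2 - y^2)) r,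
      show r - r/2 = r/2 by ring, show r - (r - R) = R by ring]
  have hval : ∫ x in (r/2)..R, 2 * Real.sqrt (R^2 - x^2)
      = R^2 * (π/2) - ((r/2) * Real.sqrt (R^2 - (r/2)^2) + R^2 * Real.arcsin ((r/2)/R)) := by
    rw [intervalIntegral.integral_const_mul, ftc_sqrt R hR (r/2) (by linarith) (by linarith)]
    ring
  rw [h1, hsplit, hright, hleft, hval, Lfun]
  have e1 : Real.arccos (r/(2*R)) = π/2 - Real.arcsin (r/(2*R)) :=
    Real.arccos_eq_pi_div_two_sub_arcsin _
  have e2 : (r/2)/R = r/(2*R) := by ring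
  have e3 : Real.sqrt (R^2 - (r/2)^2) = Real.sqrt (4*R^2 - r^2) / 2 := by
    have h4 : (0:ℝ) ≤ 4*R^2 - r^2 := by nlinarith
    rw [show R^2 - (r/2)^2 = (4*R^2 - r^2)/4 by ring, Real.sqrt_div h4,
      show (4:ℝ) = 2^2 by norm_num, Real.sqrt_sq (by norm_num : (0:ℝ) ≤ 2)]
  rw [e1, e2, e3]
  ring

lemma Lfun_nonneg (R r : ℝ) (hR : 0 < R) (hr : 0 ≤ r) (hr2 : r ≤ 2*R) : 0 ≤ Lfun R r := by
  rw [← lens_integral R r hR hr hr2]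
  apply integral_nonneg
  intro x
  positivity

lemma lens_vol_prod (R r : ℝ) (hR : 0 < R) (hr : 0 ≤ r) (hr2 : r ≤ 2*R) :
    volume {p : ℝ × ℝ | p.1^2 + p.2^2 ≤ R^2 ∧ (p.1 - r)^2 + p.2^2 ≤ R^2}
      = ENNReal.ofReal (Lfun R r) := by
  set S : Set (ℝ × ℝ) := {p : ℝ × ℝ | p.1^2 + p.2^2 ≤ R^2 ∧ (p.1 - r)^2 + p.2^2 ≤ R^2}
  have hSm : MeasurableSet S := by
    have : S = {p : ℝ × ℝ | p.1^2 + p.2^2 ≤ R^2} ∩ {p : ℝ × ℝ | (p.1 - r)^2 + p.2^2 ≤ R^2} := rfl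
    rw [this]
    exact (measurableSet_le (by fun_prop) measurable_const).inter
      (measurableSet_le (by fun_prop) measurable_const)
  set g : ℝ → ℝ := fun x => 2 * Real.sqrt (min (R^2 - x^2) (R^2 - (x - r)^2)) with hgdef
  have hgc : Continuous g := by
    apply continuous_const.mul
    apply Real.continuous_sqrt.comp
    exact ((continuous_const.sub (continuous_pow 2)).min
      (continuous_const.sub ((continuous_id.sub continuous_const).pow 2)))
  have hgi : Integrable g := by
    apply hgc.integrable_of_hasCompactSupport
    apply HasCompactSupport.intro (isCompact_Icc (a := r - R) (b := R))
    intro x hx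
    simp only [mem_Icc, not_and_or, not_le] at hx
    have : min (R^2 - x^2) (R^2 - (x - r)^2) ≤ 0 := by
      rcases hx with h | h
      · exact le_trans (min_le_right _ _) (by nlinarith)
      · exact le_trans (min_le_left _ _) (by nlinarith)
    simp only [hgdef]
    rw [Real.sqrt_eq_zero'.mpr this, mul_zero]
  have hslice : ∀ x : ℝ, volume {y : ℝ | (x, y) ∈ S} = ENNReal.ofReal (g x) := by
    intro x
    set m : ℝ := min (R^2 - x^2) (R^2 - (x - r)^2) with hm
    have hset : {y : ℝ | (x, y) ∈ S} = {y : ℝ | y^2 ≤ m} := by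
      ext y
      simp only [S, mem_setOf_eq, le_min_iff, hm]
      constructor
      · rintro ⟨h1, h2⟩; exact ⟨by linarith, by linarith⟩
      · rintro ⟨h1, h2⟩; exact ⟨by linarith, by linarith⟩
    rw [hset]
    rcases le_or_gt 0 m with hm0 | hm0
    · have : {y : ℝ | y^2 ≤ m} = Icc (-Real.sqrt m) (Real.sqrt m) := by
        ext y
        simp only [mem_setOf_eq, mem_Icc]
        rw [← abs_le, ← Real.sqrt_sq_eq_abs]
        exact ⟨fun h => Real.sqrt_le_sqrt h, fun h => by
          calc y^2 = Real.sqrt (y^2) ^ 2 := (Real.sq_sqrt (sq_nonneg y)).symm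
          _ ≤ Real.sqrt m ^ 2 := by apply pow_le_pow_left₀ (Real.sqrt_nonneg _) h
          _ = m := Real.sq_sqrt hm0⟩
      rw [this, Real.volume_Icc, hgdef]
      congr 1
      ring
    · have : {y : ℝ | y^2 ≤ m} = ∅ := by
        ext y; simp only [mem_setOf_eq, mem_empty_iff_false, iff_false, not_le]
        exact lt_of_lt_of_le hm0 (sq_nonneg y)
      rw [this, measure_empty, hgdef]
      simp only
      rw [Real.sqrt_eq_zero'.mpr hm0.le, mul_zero, ENNReal.ofReal_zero]
  calc volume S = ∫⁻ x : ℝ, volume {y : ℝ | (x, y) ∈ S} := by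
        rw [Measure.volume_eq_prod, Measure.prod_apply hSm]; rfl
    _ = ∫⁻ x : ℝ, ENNReal.ofReal (g x) := by simp_rw [hslice]
    _ = ENNReal.ofReal (∫ x : ℝ, g x) :=
        (ofReal_integral_eq_lintegral_ofReal hgi
          (Filter.Eventually.of_forall fun x => by positivity)).symm
    _ = ENNReal.ofReal (Lfun R r) := by rw [lens_integral R r hR hr hr2]

lemma Lfun_zero (R r : ℝ) (hR : 0 < R) (hr2 : 2*R ≤ r) : Lfun R r = 0 := by
  rw [Lfun, Real.arccos_eq_zero.mpr (by rw [le_div_iff₀ (by linarith)]; linarith),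
    Real.sqrt_eq_zero'.mpr (by nlinarith)]
  ring

lemma norm_le_iff_E2 (R : ℝ) (hR : 0 ≤ R) (x : E2) :
    ‖x‖ ≤ R ↔ (x 0)^2 + (x 1)^2 ≤ R^2 := by
  rw [EuclideanSpace.norm_eq,
    show ∑ i, ‖x i‖^2 = (x 0)^2 + (x 1)^2 by rw [Fin.sum_univ_two]; simp [sq_abs],
    Real.sqrt_le_left hR]

lemma lens_vol (R : ℝ) (hR : 0 < R) (u : E2) :
    volume {x : E2 | ‖x‖ ≤ R ∧ ‖x - u‖ ≤ R} = ENNReal.ofReal (Lfun R ‖u‖) := by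
  rcases le_or_gt ‖u‖ (2*R) with hle | hgt
  · set r : ℝ := ‖u‖ with hrdef
    have hr : 0 ≤ r := norm_nonneg u
    set v : E2 := r • EuclideanSpace.single (0 : Fin 2) (1:ℝ) with hvdef
    have hv0 : v 0 = r := by simp [hvdef, EuclideanSpace.single_apply]
    have hv1 : v 1 = 0 := by simp [hvdef, EuclideanSpace.single_apply]
    have hnv : ‖v‖ = r := by
      rw [hvdef, norm_smul, EuclideanSpace.norm_single]
      simp [abs_of_nonneg hr]
    -- reflection mapping u to v
    set f := Submodule.reflection (ℝ ∙ (u - v))ᗮ with hfdef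
    have hfu : f u = v := Submodule.reflection_sub (by rw [hnv])
    have hAv_meas : MeasurableSet {x : E2 | ‖x‖ ≤ R ∧ ‖x - v‖ ≤ R} := by
      have : IsClosed {x : E2 | ‖x‖ ≤ R ∧ ‖x - v‖ ≤ R} := by
        have : {x : E2 | ‖x‖ ≤ R ∧ ‖x - v‖ ≤ R}
            = {x : E2 | ‖x‖ ≤ R} ∩ {x : E2 | ‖x - v‖ ≤ R} := rfl
        rw [this]
        exact (isClosed_le continuous_norm continuous_const).inter
          (isClosed_le ((continuous_id.sub continuous_const).norm) continuous_const)
      exact this.measurableSet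
    have hpre : {x : E2 | ‖x‖ ≤ R ∧ ‖x - u‖ ≤ R}
        = f ⁻¹' {x : E2 | ‖x‖ ≤ R ∧ ‖x - v‖ ≤ R} := by
      ext x
      simp only [mem_preimage, mem_setOf_eq]
      rw [f.norm_map, ← hfu, ← map_sub, f.norm_map]
    have h1 : volume {x : E2 | ‖x‖ ≤ R ∧ ‖x - u‖ ≤ R}
        = volume {x : E2 | ‖x‖ ≤ R ∧ ‖x - v‖ ≤ R} := by
      rw [hpre]
      exact (f.measurePreserving).measure_preimage hAv_meas.nullMeasurableSet
    -- transfer to ℝ × ℝ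
    set S : Set (ℝ × ℝ) := {p : ℝ × ℝ | p.1^2 + p.2^2 ≤ R^2 ∧ (p.1 - r)^2 + p.2^2 ≤ R^2}
      with hSdef
    have hSm : MeasurableSet S := by
      have : S = {p : ℝ × ℝ | p.1^2 + p.2^2 ≤ R^2} ∩ {p : ℝ × ℝ | (p.1 - r)^2 + p.2^2 ≤ R^2} := rfl
      rw [this]
      exact (measurableSet_le (by fun_prop) measurable_const).inter
        (measurableSet_le (by fun_prop) measurable_const)
    have hmp := (volume_preserving_finTwoArrow ℝ).comp
      (EuclideanSpace.volume_preserving_symm_measurableEquiv_toLp (Fin 2))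
    have hpre2 : {x : E2 | ‖x‖ ≤ R ∧ ‖x - v‖ ≤ R}
        = (⇑(MeasurableEquiv.finTwoArrow (α := ℝ))
            ∘ ⇑(MeasurableEquiv.toLp 2 (Fin 2 → ℝ)).symm) ⁻¹' S := by
      ext x
      have hx01 : (⇑(MeasurableEquiv.finTwoArrow (α := ℝ))
          ∘ ⇑(MeasurableEquiv.toLp 2 (Fin 2 → ℝ)).symm) x = (x 0, x 1) := rfl
      simp only [mem_preimage, hx01, hSdef, mem_setOf_eq]
      rw [norm_le_iff_E2 R hR.le, norm_le_iff_E2 R hR.le,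
        show (x - v) 0 = x 0 - r by rw [PiLp.sub_apply, hv0],
        show (x - v) 1 = x 1 by rw [PiLp.sub_apply, hv1, sub_zero]]
    rw [h1, hpre2, hmp.measure_preimage hSm.nullMeasurableSet,
      lens_vol_prod R r hR hr hle]
  · have hempty : {x : E2 | ‖x‖ ≤ R ∧ ‖x - u‖ ≤ R} = ∅ := by
      ext x
      simp only [mem_setOf_eq, mem_empty_iff_false, iff_false, not_and, not_le]
      intro h1
      have := norm_sub_norm_le x u
      have htri : ‖u‖ ≤ ‖x‖ + ‖x - u‖ := by
        calc ‖u‖ = ‖x - (x - u)‖ := by congr 1; abel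
        _ ≤ ‖x‖ + ‖x - u‖ := norm_sub_le _ _
      linarith
    rw [hempty, measure_empty, Lfun_zero R ‖u‖ hR hgt.le, ENNReal.ofReal_zero]

lemma Lfun_toReal (R : ℝ) (hR : 0 < R) (r : ℝ) (hr : 0 ≤ r) :
    (ENNReal.ofReal (Lfun R r)).toReal = Lfun R r := by
  rcases le_or_gt r (2*R) with h | h
  · exact ENNReal.toReal_ofReal (Lfun_nonneg R r hR hr h)
  · rw [Lfun_zero R r hR h.le]; simp

lemma one_sub_sq_div (R r : ℝ) (hR : 0 < R) : 1 - r^2/(4*R^2) = (4*R^2 - r^2)/(2*R)^2 := by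
  rw [show ((2:ℝ)*R)^2 = 4*R^2 by ring, eq_div_iff (by positivity : (4*R^2:ℝ) ≠ 0), sub_mul,
    one_mul, div_mul_cancel₀ _ (by positivity : (4*R^2:ℝ) ≠ 0)]

lemma fdisk_eq (R : ℝ) (hR : 0 < R) (r : ℝ) :
    ((R^2 * π)^2)⁻¹ * (2 * (π * (r * (Lfun R r)))) = fdisk r R := by
  have hπ : π ≠ 0 := Real.pi_ne_zero
  have h1 : 1 - r^2/(4*R^2) = (4*R^2 - r^2)/(2*R)^2 := one_sub_sq_div R r hR
  have hsq : Real.sqrt (1 - r^2/(4*R^2)) = Real.sqrt (4*R^2 - r^2) / (2*R) := by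
    rcases le_or_gt 0 (4*R^2 - r^2) with h | h
    · rw [h1, Real.sqrt_div h, Real.sqrt_sq (by linarith)]
    · rw [Real.sqrt_eq_zero'.mpr (by rw [h1]; exact div_nonpos_of_nonpos_of_nonneg h.le (by positivity)),
        Real.sqrt_eq_zero'.mpr h.le, zero_div]
  rw [fdisk, Lfun, hsq]
  field_simp

/-- For a disk `A` of radius `R` and a bounded measurable `γ`, the normalized double
integral of `γ(‖s - t‖)` reduces to a one-dimensional integral against `fdisk`. -/
theorem stmt_9 (R : ℝ) (hR : 0 < R) (γ : ℝ → ℝ)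
    (hmeas : Measurable γ) (hbdd : ∃ M, ∀ h : ℝ, 0 ≤ h → |γ h| ≤ M) :
    ((volume (Metric.closedBall (0 : EuclideanSpace ℝ (Fin 2)) R)).toReal ^ 2)⁻¹ *
        (∫ s in Metric.closedBall (0 : EuclideanSpace ℝ (Fin 2)) R,
          ∫ t in Metric.closedBall (0 : EuclideanSpace ℝ (Fin 2)) R, γ ‖s - t‖)
      = ∫ h in Set.Icc 0 (2 * R), γ h * fdisk h R := by
  obtain ⟨M, hM⟩ := hbdd
  have hM0 : 0 ≤ M := le_trans (abs_nonneg _) (hM 0 le_rfl)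
  set D : Set E2 := Metric.closedBall (0 : E2) R with hDdef
  have hDm : MeasurableSet D := measurableSet_closedBall
  have hmemD : ∀ x : E2, x ∈ D ↔ ‖x‖ ≤ R := fun x => mem_closedBall_zero_iff
  set B : Set E2 := Metric.closedBall (0 : E2) (2*R) with hBdef
  have hBm : MeasurableSet B := measurableSet_closedBall
  -- Step 1: rewrite double integral as integral against Lfun
  have step1 : (∫ s in D, ∫ t in D, γ ‖s - t‖)
      = ∫ u : E2, γ ‖u‖ * Lfun R ‖u‖ := by
    have inner_eq : ∀ s : E2, (∫ t in D, γ ‖s - t‖)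
        = ∫ u : E2, D.indicator (fun _ => (1:ℝ)) (s - u) * γ ‖u‖ := by
      intro s
      rw [← integral_indicator hDm,
        ← integral_sub_left_eq_self (fun t => D.indicator (fun t => γ ‖s - t‖) t) volume s]
      congr 1
      ext u
      by_cases h : s - u ∈ D
      · simp only [indicator_of_mem h, sub_sub_cancel, one_mul]
      · simp only [indicator_of_notMem h, zero_mul]
    set F : E2 → E2 → ℝ :=
      fun s u => D.indicator (fun _ => (1:ℝ)) s *
        (D.indicator (fun _ => (1:ℝ)) (s - u) * γ ‖u‖) with hFdef
    have hFi : Integrable (Function.uncurry F) ((volume : Measure E2).prod volume) := by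
      have hmeasF : Measurable (Function.uncurry F) := by
        apply Measurable.mul
        · exact (measurable_one.indicator hDm).comp measurable_fst
        · apply Measurable.mul
          · exact (measurable_one.indicator hDm).comp (measurable_fst.sub measurable_snd)
          · exact hmeas.comp (measurable_norm.comp measurable_snd)
      have hgi : Integrable ((D ×ˢ B).indicator fun _ => M)
          ((volume : Measure E2).prod volume) := by
        rw [integrable_indicator_iff (hDm.prod hBm)]
        apply (integrableOn_const_iff (by finiteness)).mpr
        right
        rw [Measure.prod_prod]
        exact ENNReal.mul_lt_top measure_closedBall_lt_top measure_closedBall_lt_top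
      apply Integrable.mono' hgi hmeasF.aestronglyMeasurable
      apply ae_of_all
      rintro ⟨s, u⟩
      by_cases h1 : s ∈ D
      · by_cases h2 : s - u ∈ D
        · have hu : (s, u) ∈ D ×ˢ B := by
            refine ⟨h1, ?_⟩
            rw [hBdef, mem_closedBall_zero_iff]
            rw [hmemD] at h1 h2
            calc ‖u‖ = ‖s - (s - u)‖ := by congr 1; abel
            _ ≤ ‖s‖ + ‖s - u‖ := norm_sub_le _ _
            _ ≤ 2*R := by linarith
          simp only [Function.uncurry, hFdef, indicator_of_mem h1, indicator_of_mem h2,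
            indicator_of_mem hu, one_mul]
          exact hM ‖u‖ (norm_nonneg u)
        · simp only [Function.uncurry, hFdef, indicator_of_notMem h2, zero_mul, mul_zero,
            norm_zero]
          exact indicator_nonneg (fun _ _ => hM0) _
      · simp only [Function.uncurry, hFdef, indicator_of_notMem h1, zero_mul, norm_zero]
        exact indicator_nonneg (fun _ _ => hM0) _
    have houter : (∫ s in D, ∫ t in D, γ ‖s - t‖) = ∫ s : E2, ∫ u : E2, F s u := by
      rw [← integral_indicator hDm]
      congr 1
      ext s
      by_cases hs : s ∈ D
      · rw [indicator_of_mem hs, inner_eq s]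
        congr 1
        ext u
        rw [hFdef]
        simp only [indicator_of_mem hs, one_mul]
      · rw [indicator_of_notMem hs]
        simp only [hFdef, indicator_of_notMem hs, zero_mul, integral_zero]
    have hswap : (∫ s : E2, ∫ u : E2, F s u) = ∫ u : E2, ∫ s : E2, F s u :=
      integral_integral_swap hFi
    have hinner2 : ∀ u : E2, (∫ s : E2, F s u) = γ ‖u‖ * Lfun R ‖u‖ := by
      intro u
      set A : Set E2 := {s : E2 | ‖s‖ ≤ R ∧ ‖s - u‖ ≤ R} with hAdef
      have hAm : MeasurableSet A := by
        have : A = D ∩ (fun s : E2 => s - u) ⁻¹' D := by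
          ext s
          simp only [hAdef, mem_setOf_eq, mem_inter_iff, mem_preimage, hmemD]
        rw [this]
        exact hDm.inter (hDm.preimage (measurable_id.sub_const u))
      have hptwise : ∀ s : E2, F s u = γ ‖u‖ * A.indicator (fun _ => (1:ℝ)) s := by
        intro s
        by_cases h1 : s ∈ D
        · by_cases h2 : s - u ∈ D
          · have hA : s ∈ A := ⟨(hmemD s).mp h1, (hmemD _).mp h2⟩
            simp only [hFdef, indicator_of_mem h1, indicator_of_mem h2, indicator_of_mem hA,
              one_mul, mul_one, mul_comm]
          · have hA : s ∉ A := fun hc => h2 ((hmemD _).mpr hc.2)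
            simp only [hFdef, indicator_of_notMem h2, indicator_of_notMem hA, zero_mul,
              one_mul, mul_zero]
        · have hA : s ∉ A := fun hc => h1 ((hmemD _).mpr hc.1)
          simp only [hFdef, indicator_of_notMem h1, indicator_of_notMem hA, zero_mul, mul_zero]
      calc (∫ s : E2, F s u) = ∫ s : E2, γ ‖u‖ * A.indicator (fun _ => (1:ℝ)) s := by
            simp_rw [hptwise]
        _ = γ ‖u‖ * ∫ s : E2, A.indicator (fun _ => (1:ℝ)) s := integral_const_mul _ _
        _ = γ ‖u‖ * (volume A).toReal := by rw [integral_indicator_const (1:ℝ) hAm, smul_eq_mul,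
              mul_one, measureReal_def]
        _ = γ ‖u‖ * Lfun R ‖u‖ := by
              rw [hAdef, lens_vol R hR u, Lfun_toReal R hR ‖u‖ (norm_nonneg u)]
    rw [houter, hswap]
    congr 1
    ext u
    exact hinner2 u
  -- Step 2: polar coordinates
  have hpolar := MeasureTheory.integral_fun_norm_addHaar (volume : Measure E2)
    (fun r => γ r * Lfun R r)
  rw [finrank_euclideanSpace_fin] at hpolar
  have hball : (volume (Metric.ball (0:E2) 1)).toReal = π := by
    rw [EuclideanSpace.volume_ball]
    simp only [Fintype.card_fin]
    rw [show ((2:ℕ) : ℝ) / 2 + 1 = 2 by norm_num, Real.Gamma_two,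
      show Real.sqrt π ^ 2 = π from Real.sq_sqrt Real.pi_nonneg]
    simp [Real.pi_nonneg]
  have hD : (volume D).toReal = R^2 * π := by
    rw [hDdef, EuclideanSpace.volume_closedBall]
    simp only [Fintype.card_fin]
    rw [show ((2:ℕ) : ℝ) / 2 + 1 = 2 by norm_num, Real.Gamma_two,
      show Real.sqrt π ^ 2 = π from Real.sq_sqrt Real.pi_nonneg]
    rw [ENNReal.toReal_mul, ← ENNReal.ofReal_pow hR.le, ENNReal.toReal_ofReal (by positivity),
      ENNReal.toReal_ofReal (by rw [div_one]; exact Real.pi_nonneg)]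
    rw [div_one]
  rw [step1, hpolar, hD, measureReal_def, hball]
  rw [show (2:ℕ)-1 = 1 from rfl]
  simp only [smul_eq_mul, nsmul_eq_mul, Nat.cast_ofNat, pow_one]
  calc ((R^2*π)^2)⁻¹ * (2 * (π * ∫ r in Ioi (0:ℝ), r * (γ r * Lfun R r)))
      = ∫ r in Ioi (0:ℝ), ((R^2*π)^2)⁻¹ * (2 * (π * (r * (γ r * Lfun R r)))) := by
        rw [integral_const_mul, integral_const_mul, integral_const_mul]
    _ = ∫ r in Ioi (0:ℝ), γ r * fdisk r R := by
        refine setIntegral_congr_fun measurableSet_Ioi fun r _ => ?_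
        rw [← fdisk_eq R hR r]
        ring
    _ = ∫ r in Ioc (0:ℝ) (2*R), γ r * fdisk r R := by
        have hvanish : EqOn (fun r => γ r * fdisk r R)
            ((Ioc (0:ℝ) (2*R)).indicator (fun h => γ h * fdisk h R)) (Ioi 0) := by
          intro r hr
          by_cases h : r ≤ 2*R
          · rw [indicator_of_mem (mem_Ioc.mpr ⟨mem_Ioi.mp hr, h⟩)]
          · rw [indicator_of_notMem (by simp [mem_Ioc, h])]
            have hfd : fdisk r R = 0 := by
              rw [fdisk, Real.arccos_eq_zero.mpr (by rw [le_div_iff₀ (by linarith)]; linarith),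
                Real.sqrt_eq_zero'.mpr (by
                  rw [one_sub_sq_div R r hR]
                  exact div_nonpos_of_nonpos_of_nonneg (by nlinarith) (by positivity))]
              ring
            simp only [hfd, mul_zero]
        rw [setIntegral_congr_fun measurableSet_Ioi hvanish,
          setIntegral_indicator measurableSet_Ioc,
          inter_eq_right.mpr Ioc_subset_Ioi_self]
    _ = ∫ h in Icc (0:ℝ) (2*R), γ h * fdisk h R := integral_Icc_eq_integral_Ioc.symm
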